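/- arXiv:1506.06292 — 2 statements merged into one kernel-verified Lean document; each statement's English description precedes it below -/
import Mathlib

section
/- Let γ₁, γ₂, γ₃ be real numbers and for θ ∈ (0, π) and φ ∈ ℝ let A(θ,φ) be the symmetric 2×2 real matrix with entries a₁₁ = 4(γ₁ sin²φ + γ₂ cos²φ), a₂₂ = 4(γ₁ cot²θ cos²φ + γ₂ cot²θ sin²φ + γ₃), a₁₂ = a₂₁ = 2 cot θ · sin(2φ) · (γ₁ − γ₂). Then A(θ,φ) is positive semidefinite for every θ ∈ (0, π) and every φ ∈ ℝ if and only if γ₁ ≥ 0, γ₂ ≥ 0 and γ₃ ≥ 0. (This is the statement that the anisotropically deformed Laplacian Δ_γ = (1/4)Σₖ γₖ Xₖ² on the Bloch sphere is elliptic iff all decoherence rates are nonnegative.) -/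
open Real

/-- The diffusion matrix `A(θ,φ)` of the anisotropically deformed Laplacian
`Δ_γ = (1/4) Σₖ γₖ Xₖ²` on the Bloch sphere is positive semidefinite at every point
with `θ ∈ (0, π)` and `φ ∈ ℝ` if and only if all decoherence rates are nonnegative
(ellipticity of `Δ_γ` iff `γₖ ≥ 0`). Here `cot θ = cos θ / sin θ`. -/
theorem deformed_laplacian_elliptic_iff (γ₁ γ₂ γ₃ : ℝ) :
    (∀ θ ∈ Set.Ioo (0 : ℝ) π, ∀ φ : ℝ,
      (!![4 * (γ₁ * sin φ ^ 2 + γ₂ * cos φ ^ 2),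
          2 * (cos θ / sin θ) * sin (2 * φ) * (γ₁ - γ₂);
          2 * (cos θ / sin θ) * sin (2 * φ) * (γ₁ - γ₂),
          4 * (γ₁ * (cos θ / sin θ) ^ 2 * cos φ ^ 2 +
               γ₂ * (cos θ / sin θ) ^ 2 * sin φ ^ 2 + γ₃)] : Matrix (Fin 2) (Fin 2) ℝ).PosSemidef)
    ↔ (0 ≤ γ₁ ∧ 0 ≤ γ₂ ∧ 0 ≤ γ₃) := by
  have hmem : (π/2 : ℝ) ∈ Set.Ioo (0:ℝ) π := ⟨by positivity, by linarith [pi_pos]⟩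
  constructor
  · intro h
    refine ⟨?_, ?_, ?_⟩
    · have h1 := (Matrix.posSemidef_iff_dotProduct_mulVec.mp (h (π/2) hmem (π/2))).2 ![1, 0]
      simp [Matrix.mulVec, dotProduct, Fin.sum_univ_two] at h1
      nlinarith [h1]
    · have h1 := (Matrix.posSemidef_iff_dotProduct_mulVec.mp (h (π/2) hmem 0)).2 ![1, 0]
      simp [Matrix.mulVec, dotProduct, Fin.sum_univ_two] at h1
      nlinarith [h1]
    · have h1 := (Matrix.posSemidef_iff_dotProduct_mulVec.mp (h (π/2) hmem 0)).2 ![0, 1]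
      simp [Matrix.mulVec, dotProduct, Fin.sum_univ_two] at h1
      nlinarith [h1]
  · rintro ⟨h1, h2, h3⟩ θ hθ φ
    refine Matrix.posSemidef_iff_dotProduct_mulVec.mpr ⟨?_, ?_⟩
    · ext i j
      fin_cases i <;> fin_cases j <;>
        simp [Matrix.conjTranspose, Matrix.IsHermitian, Matrix.vecHead, Matrix.vecTail]
    · intro x
      have key : dotProduct (star x)
          ((!![4 * (γ₁ * sin φ ^ 2 + γ₂ * cos φ ^ 2),
          2 * (cos θ / sin θ) * sin (2 * φ) * (γ₁ - γ₂);
          2 * (cos θ / sin θ) * sin (2 * φ) * (γ₁ - γ₂),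
          4 * (γ₁ * (cos θ / sin θ) ^ 2 * cos φ ^ 2 +
               γ₂ * (cos θ / sin θ) ^ 2 * sin φ ^ 2 + γ₃)] : Matrix (Fin 2) (Fin 2) ℝ).mulVec x)
          = 4 * γ₁ * (sin φ * x 0 + (cos θ / sin θ) * cos φ * x 1) ^ 2
          + 4 * γ₂ * (cos φ * x 0 - (cos θ / sin θ) * sin φ * x 1) ^ 2
          + 4 * γ₃ * (x 1) ^ 2 := by
        simp [Matrix.mulVec, dotProduct, Fin.sum_univ_two, Real.sin_two_mul]
        ring
      rw [key]
      positivity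
end

section
/- Let γ₁, γ₂, γ₃ be real numbers, x₁, x₂, x₃ real numbers, and define p : ℝ × ℝ × ℝ → ℝ by p(t, θ, φ) = (1/π)(1 + e^{−(γ₂+γ₃)t} x₁ sinθ cosφ + e^{−(γ₁+γ₃)t} x₂ sinθ sinφ + e^{−(γ₁+γ₂)t} x₃ cosθ). Then for every t ∈ ℝ and every (θ, φ) with θ ∈ (0, π), p satisfies ∂ₜ p(t,θ,φ) = (1/16)[γ₁ X₁(X₁ p(t,·,·)) + γ₂ X₂(X₂ p(t,·,·)) + γ₃ X₃(X₃ p(t,·,·))](θ,φ), where X₁ f = −4 sinφ ∂θ f − 4 cotθ cosφ ∂φ f, X₂ f = 4 cosφ ∂θ f − 4 cotθ sinφ ∂φ f, X₃ f = 4 ∂φ f. -/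
open Real

/-- Partial derivative with respect to the first variable `θ`. -/
noncomputable def dTheta (f : ℝ → ℝ → ℝ) (θ φ : ℝ) : ℝ := deriv (fun x => f x φ) θ

/-- Partial derivative with respect to the second variable `φ`. -/
noncomputable def dPhi (f : ℝ → ℝ → ℝ) (θ φ : ℝ) : ℝ := deriv (fun y => f θ y) φ

/-- The Hamiltonian vector field of `σ₁`: `X₁ f = −4 sinφ ∂θ f − 4 cotθ cosφ ∂φ f`. -/
noncomputable def X1 (f : ℝ → ℝ → ℝ) (θ φ : ℝ) : ℝ :=
  -4 * sin φ * dTheta f θ φ - 4 * (cos θ / sin θ) * cos φ * dPhi f θ φ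

/-- The Hamiltonian vector field of `σ₂`: `X₂ f = 4 cosφ ∂θ f − 4 cotθ sinφ ∂φ f`. -/
noncomputable def X2 (f : ℝ → ℝ → ℝ) (θ φ : ℝ) : ℝ :=
  4 * cos φ * dTheta f θ φ - 4 * (cos θ / sin θ) * sin φ * dPhi f θ φ

/-- The Hamiltonian vector field of `σ₃`: `X₃ f = 4 ∂φ f`. -/
noncomputable def X3 (f : ℝ → ℝ → ℝ) (θ φ : ℝ) : ℝ := 4 * dPhi f θ φ

/-- Auxiliary family of functions closed under the vector fields. -/
noncomputable def Fam (A a b c : ℝ) : ℝ → ℝ → ℝ :=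
  fun θ φ => A + a * (sin θ * cos φ) + b * (sin θ * sin φ) + c * cos θ

lemma dTheta_Fam (A a b c θ φ : ℝ) :
    dTheta (Fam A a b c) θ φ = a * (cos θ * cos φ) + b * (cos θ * sin φ) - c * sin θ := by
  have h1 := ((Real.hasDerivAt_sin θ).mul_const (cos φ)).const_mul a
  have h2 := ((Real.hasDerivAt_sin θ).mul_const (sin φ)).const_mul b
  have h3 := (Real.hasDerivAt_cos θ).const_mul c
  have h := (((hasDerivAt_const θ A).add h1).add h2).add h3
  unfold dTheta Fam
  exact h.deriv.trans (by ring)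

lemma dPhi_Fam (A a b c θ φ : ℝ) :
    dPhi (Fam A a b c) θ φ = -a * (sin θ * sin φ) + b * (sin θ * cos φ) := by
  have h1 := ((Real.hasDerivAt_cos φ).const_mul (sin θ)).const_mul a
  have h2 := ((Real.hasDerivAt_sin φ).const_mul (sin θ)).const_mul b
  have h := (((hasDerivAt_const φ (A + c * cos θ)).add h1).add h2)
  unfold dPhi Fam
  have heq : (fun y => A + a * (sin θ * cos y) + b * (sin θ * sin y) + c * cos θ)
      = fun y => A + c * cos θ + a * (sin θ * cos y) + b * (sin θ * sin y) := by
    funext y; ring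
  rw [heq]; exact h.deriv.trans (by ring)

lemma X1_Fam (A a b c θ φ : ℝ) (hs : sin θ ≠ 0) :
    X1 (Fam A a b c) θ φ = Fam 0 0 (4 * c) (-4 * b) θ φ := by
  unfold X1
  rw [dTheta_Fam, dPhi_Fam]
  unfold Fam
  field_simp
  linear_combination (-4 * b * cos θ) * sin_sq_add_cos_sq φ

lemma X2_Fam (A a b c θ φ : ℝ) (hs : sin θ ≠ 0) :
    X2 (Fam A a b c) θ φ = Fam 0 (-4 * c) 0 (4 * a) θ φ := by
  unfold X2
  rw [dTheta_Fam, dPhi_Fam]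
  unfold Fam
  field_simp
  linear_combination (4 * a * cos θ) * sin_sq_add_cos_sq φ

lemma X3_Fam (A a b c θ φ : ℝ) :
    X3 (Fam A a b c) θ φ = Fam 0 (4 * b) (-4 * a) 0 θ φ := by
  unfold X3
  rw [dPhi_Fam]
  unfold Fam
  ring

lemma X1X1_Fam (A a b c θ φ : ℝ) (hs : sin θ ≠ 0) :
    X1 (X1 (Fam A a b c)) θ φ = -16 * b * (sin θ * sin φ) + -16 * c * cos θ := by
  have hev : ∀ᶠ x in nhds θ, sin x ≠ 0 :=
    Real.continuous_sin.continuousAt.eventually_ne hs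
  have hdT : dTheta (X1 (Fam A a b c)) θ φ = dTheta (Fam 0 0 (4 * c) (-4 * b)) θ φ := by
    unfold dTheta
    apply Filter.EventuallyEq.deriv_eq
    filter_upwards [hev] with x hx
    exact X1_Fam A a b c x φ hx
  have hdP : dPhi (X1 (Fam A a b c)) θ φ = dPhi (Fam 0 0 (4 * c) (-4 * b)) θ φ := by
    unfold dPhi
    congr 1
    funext y
    exact X1_Fam A a b c θ y hs
  have houter : X1 (X1 (Fam A a b c)) θ φ = -4 * sin φ * dTheta (X1 (Fam A a b c)) θ φ
      - 4 * (cos θ / sin θ) * cos φ * dPhi (X1 (Fam A a b c)) θ φ := rfl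
  rw [houter, hdT, hdP, dTheta_Fam, dPhi_Fam]
  field_simp
  linear_combination (-16 * c * cos θ) * sin_sq_add_cos_sq φ

lemma X2X2_Fam (A a b c θ φ : ℝ) (hs : sin θ ≠ 0) :
    X2 (X2 (Fam A a b c)) θ φ = -16 * a * (sin θ * cos φ) + -16 * c * cos θ := by
  have hev : ∀ᶠ x in nhds θ, sin x ≠ 0 :=
    Real.continuous_sin.continuousAt.eventually_ne hs
  have hdT : dTheta (X2 (Fam A a b c)) θ φ = dTheta (Fam 0 (-4 * c) 0 (4 * a)) θ φ := by
    unfold dTheta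
    apply Filter.EventuallyEq.deriv_eq
    filter_upwards [hev] with x hx
    exact X2_Fam A a b c x φ hx
  have hdP : dPhi (X2 (Fam A a b c)) θ φ = dPhi (Fam 0 (-4 * c) 0 (4 * a)) θ φ := by
    unfold dPhi
    congr 1
    funext y
    exact X2_Fam A a b c θ y hs
  have houter : X2 (X2 (Fam A a b c)) θ φ = 4 * cos φ * dTheta (X2 (Fam A a b c)) θ φ
      - 4 * (cos θ / sin θ) * sin φ * dPhi (X2 (Fam A a b c)) θ φ := rfl
  rw [houter, hdT, hdP, dTheta_Fam, dPhi_Fam]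
  field_simp
  linear_combination (-16 * c * cos θ) * sin_sq_add_cos_sq φ

lemma X3X3_Fam (A a b c θ φ : ℝ) :
    X3 (X3 (Fam A a b c)) θ φ = -16 * a * (sin θ * cos φ) + -16 * b * (sin θ * sin φ) := by
  have hfun : X3 (Fam A a b c) = Fam 0 (4 * b) (-4 * a) 0 := by
    funext x y; exact X3_Fam A a b c x y
  rw [hfun, X3_Fam]
  unfold Fam; ring

/-- The Kähler-function solution
`p(t,θ,φ) = (1/π)(1 + e^{−(γ₂+γ₃)t}x₁sinθcosφ + e^{−(γ₁+γ₃)t}x₂sinθsinφ + e^{−(γ₁+γ₂)t}x₃cosθ)`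
satisfies the geometric evolution equation `∂ₜp = (1/16) Σₖ γₖ Xₖ² p` on the Bloch sphere. -/
theorem kaehler_solution_satisfies_evolution (γ₁ γ₂ γ₃ x₁ x₂ x₃ : ℝ)
    (p : ℝ → ℝ → ℝ → ℝ)
    (hp : p = fun t θ φ => (1 / π) * (1 + exp (-(γ₂ + γ₃) * t) * x₁ * (sin θ * cos φ)
      + exp (-(γ₁ + γ₃) * t) * x₂ * (sin θ * sin φ)
      + exp (-(γ₁ + γ₂) * t) * x₃ * cos θ))
    (t θ φ : ℝ) (hθ : θ ∈ Set.Ioo (0 : ℝ) π) :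
    deriv (fun s => p s θ φ) t =
      (1 / 16) * (γ₁ * X1 (X1 (p t)) θ φ + γ₂ * X2 (X2 (p t)) θ φ + γ₃ * X3 (X3 (p t)) θ φ) := by
  subst hp
  have hs : sin θ ≠ 0 := ne_of_gt (Real.sin_pos_of_pos_of_lt_pi hθ.1 hθ.2)
  -- rewrite the spatial function as a member of the family
  have hpt : ((fun t θ φ => (1 / π) * (1 + exp (-(γ₂ + γ₃) * t) * x₁ * (sin θ * cos φ)
      + exp (-(γ₁ + γ₃) * t) * x₂ * (sin θ * sin φ)
      + exp (-(γ₁ + γ₂) * t) * x₃ * cos θ)) t)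
      = Fam (1 / π) (1 / π * (exp (-(γ₂ + γ₃) * t) * x₁))
          (1 / π * (exp (-(γ₁ + γ₃) * t) * x₂)) (1 / π * (exp (-(γ₁ + γ₂) * t) * x₃)) := by
    funext a b; unfold Fam; ring
  -- time derivative
  have h1 : HasDerivAt (fun s : ℝ => exp (-(γ₂ + γ₃) * s))
      (exp (-(γ₂ + γ₃) * t) * (-(γ₂ + γ₃))) t := by
    simpa using ((hasDerivAt_id t).const_mul (-(γ₂ + γ₃))).exp
  have h2 : HasDerivAt (fun s : ℝ => exp (-(γ₁ + γ₃) * s))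
      (exp (-(γ₁ + γ₃) * t) * (-(γ₁ + γ₃))) t := by
    simpa using ((hasDerivAt_id t).const_mul (-(γ₁ + γ₃))).exp
  have h3 : HasDerivAt (fun s : ℝ => exp (-(γ₁ + γ₂) * s))
      (exp (-(γ₁ + γ₂) * t) * (-(γ₁ + γ₂))) t := by
    simpa using ((hasDerivAt_id t).const_mul (-(γ₁ + γ₂))).exp
  have hD : HasDerivAt (fun s => (1 / π) * (1 + exp (-(γ₂ + γ₃) * s) * x₁ * (sin θ * cos φ)
      + exp (-(γ₁ + γ₃) * s) * x₂ * (sin θ * sin φ)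
      + exp (-(γ₁ + γ₂) * s) * x₃ * cos θ))
      ((1 / π) * (exp (-(γ₂ + γ₃) * t) * (-(γ₂ + γ₃)) * x₁ * (sin θ * cos φ)
        + exp (-(γ₁ + γ₃) * t) * (-(γ₁ + γ₃)) * x₂ * (sin θ * sin φ)
        + exp (-(γ₁ + γ₂) * t) * (-(γ₁ + γ₂)) * x₃ * cos θ)) t := by
    have := ((((hasDerivAt_const t (1 : ℝ)).add
        ((h1.mul_const x₁).mul_const (sin θ * cos φ))).add
        ((h2.mul_const x₂).mul_const (sin θ * sin φ))).add
        ((h3.mul_const x₃).mul_const (cos θ))).const_mul (1 / π)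
    exact this.congr_deriv (by ring)
  rw [hD.deriv, hpt, X1X1_Fam _ _ _ _ _ _ hs, X2X2_Fam _ _ _ _ _ _ hs, X3X3_Fam]
  ring
end
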